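/- arXiv:1302.5760 — 2 statements merged into one kernel-verified Lean document; each statement's English description precedes it below -/
import Mathlib

section
/- There exist real numbers r̃*_1, …, r̃*_m with the following property. Let (γ^ε)_{ε∈(0,1)} and (r̃^ε)_{ε∈(0,1)} be families of vectors in ℝ^m such that for each k ∈ {1,…,m}, sup_{ε∈(0,1)} ε^{-1} |γ^ε_k − λ( (2/r_k) Σ_{k'=k+1}^m ((k'−k)/k) r_{k'} + 1 )| < ∞ and sup_{ε∈(0,1)} ε^{-3/2} |r̃^ε_k − r_k − ε r̃*_k| < ∞. Then there exists a finite constant C such that for all ε ∈ (0,1) and all j ∈ {1,…,m}: |ε^{1/2}(A^ε r̃^ε)_j − ε^{1/2}·(1/4)·Σ_{k=j}^m r_k (u(ε) − ε γ^ε_k v(ε))| ≤ C ε² and |ε (B r̃^ε)_j − ε·(1/4)·r_j (γ^ε_j u(ε) − v(ε))| ≤ C ε². -/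
open Finset
open Real

/-- `u(ε) := ε^{-1/2} sinh(2λ ε^{1/2})` for `ε > 0`, with `u(0) := 2λ`. -/
noncomputable def uFn (lam ε : ℝ) : ℝ :=
  if ε = 0 then 2 * lam else (Real.sqrt ε)⁻¹ * Real.sinh (2 * lam * Real.sqrt ε)

/-- `v(ε) := ε^{-1}(cosh(2λ ε^{1/2}) - 1)` for `ε > 0`, with `v(0) := 2λ²`. -/
noncomputable def vFn (lam ε : ℝ) : ℝ :=
  if ε = 0 then 2 * lam ^ 2 else ε⁻¹ * (Real.cosh (2 * lam * Real.sqrt ε) - 1)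

/-- The matrix `A^ε`, where the index `j : Fin m` represents `j+1 ∈ {1,…,m}`:
`A^ε_{jk} = 1_{j≤k} (λ/2 + ελ³((3k-2)/12 - (j-1)/2))`. -/
noncomputable def Aeps (m : ℕ) (lam ε : ℝ) : Matrix (Fin m) (Fin m) ℝ :=
  fun j k => if (j : ℕ) ≤ (k : ℕ) then
    lam / 2 + ε * lam ^ 3 * ((3 * (((k : ℕ) : ℝ) + 1) - 2) / 12 - ((((j : ℕ) : ℝ) + 1) - 1) / 2)
  else 0

/-- The matrix `B`, `B_{jk} = λ² (k-j)_+ / j`. -/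
noncomputable def Bmat (m : ℕ) (lam : ℝ) : Matrix (Fin m) (Fin m) ℝ :=
  fun j k => lam ^ 2 * max ((((k : ℕ) : ℝ) + 1) - (((j : ℕ) : ℝ) + 1)) 0 / (((j : ℕ) : ℝ) + 1)


def Bdd (p : ℝ) (F : ℝ → ℝ) : Prop := ∃ C, ∀ ε ∈ Set.Ioo (0:ℝ) 1, |F ε| ≤ C * ε ^ p

namespace Bdd

lemma of_le {p C} {F : ℝ → ℝ} (h : ∀ ε ∈ Set.Ioo (0:ℝ) 1, |F ε| ≤ C * ε ^ p) : Bdd p F := ⟨C, h⟩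

lemma congr {p} {F G : ℝ → ℝ} (h : ∀ ε ∈ Set.Ioo (0:ℝ) 1, F ε = G ε) (hF : Bdd p F) :
    Bdd p G := by
  obtain ⟨C, hC⟩ := hF
  exact ⟨C, fun ε hε => by rw [← h ε hε]; exact hC ε hε⟩

lemma exp_eq {p q} {F : ℝ → ℝ} (h : p = q) (hF : Bdd p F) : Bdd q F := h ▸ hF

lemma add {p} {F G : ℝ → ℝ} (hF : Bdd p F) (hG : Bdd p G) :
    Bdd p (fun ε => F ε + G ε) := by
  obtain ⟨C, hC⟩ := hF; obtain ⟨D, hD⟩ := hG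
  refine ⟨C + D, fun ε hε => ?_⟩
  calc |F ε + G ε| ≤ |F ε| + |G ε| := abs_add_le _ _
    _ ≤ C * ε ^ p + D * ε ^ p := add_le_add (hC ε hε) (hD ε hε)
    _ = (C + D) * ε ^ p := by ring

lemma neg {p} {F : ℝ → ℝ} (hF : Bdd p F) : Bdd p (fun ε => -F ε) := by
  obtain ⟨C, hC⟩ := hF
  exact ⟨C, fun ε hε => by rw [abs_neg]; exact hC ε hε⟩

lemma sub {p} {F G : ℝ → ℝ} (hF : Bdd p F) (hG : Bdd p G) :
    Bdd p (fun ε => F ε - G ε) := by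
  have := hF.add hG.neg
  exact this.congr (fun ε _ => by ring) |>.exp_eq rfl

lemma mul {p q} {F G : ℝ → ℝ} (hF : Bdd p F) (hG : Bdd q G) :
    Bdd (p + q) (fun ε => F ε * G ε) := by
  obtain ⟨C, hC⟩ := hF; obtain ⟨D, hD⟩ := hG
  refine ⟨C * D, fun ε hε => ?_⟩
  rw [Real.rpow_add hε.1, abs_mul]
  calc |F ε| * |G ε| ≤ (C * ε ^ p) * (D * ε ^ q) :=
        mul_le_mul (hC ε hε) (hD ε hε) (abs_nonneg _) (le_trans (abs_nonneg _) (hC ε hε))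
    _ = C * D * (ε ^ p * ε ^ q) := by ring

lemma mono {p q} {F : ℝ → ℝ} (hpq : q ≤ p) (hF : Bdd p F) : Bdd q F := by
  obtain ⟨C, hC⟩ := hF
  refine ⟨max C 0, fun ε hε => ?_⟩
  calc |F ε| ≤ C * ε ^ p := hC ε hε
    _ ≤ max C 0 * ε ^ p :=
        mul_le_mul_of_nonneg_right (le_max_left _ _) (Real.rpow_nonneg hε.1.le _)
    _ ≤ max C 0 * ε ^ q :=
        mul_le_mul_of_nonneg_left
          (Real.rpow_le_rpow_of_exponent_ge hε.1 hε.2.le hpq) (le_max_right _ _)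

lemma const (c : ℝ) : Bdd 0 (fun _ => c) :=
  ⟨|c|, fun ε hε => by rw [Real.rpow_zero, mul_one]⟩

lemma eps : Bdd 1 (fun ε => ε) :=
  ⟨1, fun ε hε => by rw [Real.rpow_one, one_mul, abs_of_pos hε.1]⟩

lemma sqrt : Bdd (1/2) (fun ε => Real.sqrt ε) :=
  ⟨1, fun ε hε => by
    rw [one_mul, ← Real.sqrt_eq_rpow, abs_of_nonneg (Real.sqrt_nonneg _)]⟩

lemma zero {p} : Bdd p (fun _ => 0) :=
  ⟨0, fun ε hε => by simp⟩

lemma sum {ι : Type*} {p : ℝ} {s : Finset ι} {F : ι → ℝ → ℝ}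
    (h : ∀ i ∈ s, Bdd p (F i)) : Bdd p (fun ε => ∑ i ∈ s, F i ε) := by
  classical
  induction s using Finset.induction_on with
  | empty => exact Bdd.zero.congr (fun ε _ => by simp)
  | @insert a s' hx ih =>
      have := (h a (mem_insert_self a s')).add (ih (fun i hi => h i (mem_insert_of_mem hi)))
      exact this.congr (fun ε _ => by rw [Finset.sum_insert hx])

end Bdd

lemma sinh_taylor {x : ℝ} (h0 : 0 ≤ x) (h1 : x ≤ 1) :
    |Real.sinh x - (x + x ^ 3 / 6)| ≤ x ^ 5 / 100 := by
  have hax : |x| ≤ 1 := by rwa [abs_of_nonneg h0]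
  have hp := Real.exp_bound hax (n := 5) (by norm_num)
  have hax' : |(-x)| ≤ 1 := by rwa [abs_neg]
  have hq := Real.exp_bound hax' (n := 5) (by norm_num)
  have hsp : ∑ i ∈ Finset.range 5, x ^ i / (i.factorial : ℝ)
      = 1 + x + x ^ 2 / 2 + x ^ 3 / 6 + x ^ 4 / 24 := by
    simp [Finset.sum_range_succ, Nat.factorial]
  have hsq : ∑ i ∈ Finset.range 5, (-x) ^ i / (i.factorial : ℝ)
      = 1 - x + x ^ 2 / 2 - x ^ 3 / 6 + x ^ 4 / 24 := by
    simp [Finset.sum_range_succ, Nat.factorial]; ring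
  rw [hsp] at hp
  rw [hsq, abs_neg, abs_of_nonneg h0] at hq
  rw [abs_of_nonneg h0] at hp
  norm_num [Nat.factorial] at hp hq
  have hsinh : Real.sinh x - (x + x ^ 3 / 6)
      = ((Real.exp x - (1 + x + x ^ 2 / 2 + x ^ 3 / 6 + x ^ 4 / 24))
        - (Real.exp (-x) - (1 - x + x ^ 2 / 2 - x ^ 3 / 6 + x ^ 4 / 24))) / 2 := by
    rw [Real.sinh_eq]; ring
  rw [hsinh, abs_div, abs_of_nonneg (by norm_num : (0:ℝ) ≤ 2)]
  have := abs_sub_abs_le_abs_sub (Real.exp x - (1 + x + x ^ 2 / 2 + x ^ 3 / 6 + x ^ 4 / 24))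
    (Real.exp (-x) - (1 - x + x ^ 2 / 2 - x ^ 3 / 6 + x ^ 4 / 24))
  have habs := abs_sub (Real.exp x - (1 + x + x ^ 2 / 2 + x ^ 3 / 6 + x ^ 4 / 24))
    (Real.exp (-x) - (1 - x + x ^ 2 / 2 - x ^ 3 / 6 + x ^ 4 / 24))
  nlinarith [hp, hq, habs]

lemma cosh_taylor {x : ℝ} (h0 : 0 ≤ x) (h1 : x ≤ 1) :
    |Real.cosh x - (1 + x ^ 2 / 2)| ≤ x ^ 4 / 10 := by
  have hax : |x| ≤ 1 := by rwa [abs_of_nonneg h0]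
  have hp := Real.exp_bound hax (n := 4) (by norm_num)
  have hax' : |(-x)| ≤ 1 := by rwa [abs_neg]
  have hq := Real.exp_bound hax' (n := 4) (by norm_num)
  have hsp : ∑ i ∈ Finset.range 4, x ^ i / (i.factorial : ℝ)
      = 1 + x + x ^ 2 / 2 + x ^ 3 / 6 := by
    simp [Finset.sum_range_succ, Nat.factorial]
  have hsq : ∑ i ∈ Finset.range 4, (-x) ^ i / (i.factorial : ℝ)
      = 1 - x + x ^ 2 / 2 - x ^ 3 / 6 := by
    simp [Finset.sum_range_succ, Nat.factorial]; ring
  rw [hsp] at hp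
  rw [hsq, abs_neg, abs_of_nonneg h0] at hq
  rw [abs_of_nonneg h0] at hp
  norm_num [Nat.factorial] at hp hq
  have hcosh : Real.cosh x - (1 + x ^ 2 / 2)
      = ((Real.exp x - (1 + x + x ^ 2 / 2 + x ^ 3 / 6))
        + (Real.exp (-x) - (1 - x + x ^ 2 / 2 - x ^ 3 / 6))) / 2 := by
    rw [Real.cosh_eq]; ring
  rw [hcosh, abs_div, abs_of_nonneg (by norm_num : (0:ℝ) ≤ 2)]
  have habs := abs_add_le (Real.exp x - (1 + x + x ^ 2 / 2 + x ^ 3 / 6))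
    (Real.exp (-x) - (1 - x + x ^ 2 / 2 - x ^ 3 / 6))
  nlinarith [hp, hq, habs]

lemma bdd_u {lam : ℝ} (hlam : 0 < lam) :
    Bdd 2 (fun ε => uFn lam ε - (2 * lam + (4/3) * lam ^ 3 * ε)) := by
  refine ⟨max (lam ^ 5)
      (16 * lam ^ 4 * (2 * lam * Real.sinh (2 * lam) + 2 * lam + (4/3) * lam ^ 3)),
    fun ε hε => ?_⟩
  obtain ⟨hε0, hε1⟩ := hε
  dsimp only
  have hrp : ε ^ (2:ℝ) = ε ^ 2 := by rw [← Real.rpow_natCast ε 2]; norm_num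
  rw [hrp]
  have hs0 : 0 < Real.sqrt ε := Real.sqrt_pos.2 hε0
  have hs1 : Real.sqrt ε < 1 := by
    rw [show (1:ℝ) = Real.sqrt 1 by simp]; exact Real.sqrt_lt_sqrt hε0.le hε1
  have hse : Real.sqrt ε ^ 2 = ε := Real.sq_sqrt hε0.le
  set s := Real.sqrt ε with hsdef
  have hsne : s ≠ 0 := ne_of_gt hs0
  have hu : uFn lam ε = s⁻¹ * Real.sinh (2 * lam * s) := by
    rw [uFn, if_neg (ne_of_gt hε0)]
  have hε2 : (0:ℝ) < ε ^ 2 := by positivity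
  rcases le_or_gt (2 * lam * s) 1 with hx1 | hx1
  · -- small regime
    have hx0 : (0:ℝ) ≤ 2 * lam * s := by positivity
    have ht := sinh_taylor hx0 hx1
    have heq : uFn lam ε - (2 * lam + (4/3) * lam ^ 3 * ε)
        = s⁻¹ * (Real.sinh (2 * lam * s) - (2 * lam * s + (2 * lam * s) ^ 3 / 6)) := by
      rw [hu, ← hse]; field_simp; ring
    rw [heq, abs_mul, abs_inv, abs_of_pos hs0]
    have h2 : s⁻¹ * |Real.sinh (2 * lam * s) - (2 * lam * s + (2 * lam * s) ^ 3 / 6)|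
        ≤ s⁻¹ * ((2 * lam * s) ^ 5 / 100) := by
      exact mul_le_mul_of_nonneg_left ht (by positivity)
    have h3 : s⁻¹ * ((2 * lam * s) ^ 5 / 100) = (32/100) * lam ^ 5 * (s ^ 2) ^ 2 := by
      field_simp; ring
    rw [h3, hse] at h2
    refine h2.trans ?_
    have : (32/100) * lam ^ 5 ≤ lam ^ 5 := by nlinarith [pow_pos hlam 5]
    calc (32/100) * lam ^ 5 * ε ^ 2 ≤ lam ^ 5 * ε ^ 2 := by
          exact mul_le_mul_of_nonneg_right this hε2.le
      _ ≤ _ := mul_le_mul_of_nonneg_right (le_max_left _ _) hε2.le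
  · -- large regime
    have hsinv : s⁻¹ < 2 * lam := by
      rw [inv_eq_one_div, div_lt_iff₀ hs0]
      linarith
    have hxle : 2 * lam * s ≤ 2 * lam := by nlinarith
    have hsh : Real.sinh (2 * lam * s) ≤ Real.sinh (2 * lam) := Real.sinh_le_sinh.2 hxle
    have hsh0 : 0 < Real.sinh (2 * lam * s) := by
      rw [show (0:ℝ) = Real.sinh 0 by simp]
      exact Real.sinh_lt_sinh.2 (by positivity)
    have hsh20 : 0 < Real.sinh (2 * lam) := lt_of_lt_of_le hsh0 hsh
    have hεlarge : 1 < 4 * lam ^ 2 * ε := by nlinarith [hse]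
    have hM : |uFn lam ε - (2 * lam + (4/3) * lam ^ 3 * ε)|
        ≤ 2 * lam * Real.sinh (2 * lam) + 2 * lam + (4/3) * lam ^ 3 := by
      rw [hu]
      have h1 : |s⁻¹ * Real.sinh (2 * lam * s)| ≤ 2 * lam * Real.sinh (2 * lam) := by
        rw [abs_of_pos (by positivity)]
        nlinarith [inv_pos.2 hs0]
      have h2 : |2 * lam + (4/3) * lam ^ 3 * ε| ≤ 2 * lam + (4/3) * lam ^ 3 := by
        rw [abs_of_pos (by positivity)]
        nlinarith [pow_pos hlam 3]
      calc |s⁻¹ * Real.sinh (2 * lam * s) - (2 * lam + (4/3) * lam ^ 3 * ε)|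
          ≤ |s⁻¹ * Real.sinh (2 * lam * s)| + |2 * lam + (4/3) * lam ^ 3 * ε| := abs_sub _ _
        _ ≤ _ := by linarith
    refine hM.trans ?_
    have hM0 : (0:ℝ) ≤ 2 * lam * Real.sinh (2 * lam) + 2 * lam + (4/3) * lam ^ 3 := by
      positivity
    have h16 : 1 ≤ 16 * lam ^ 4 * ε ^ 2 := by nlinarith
    calc 2 * lam * Real.sinh (2 * lam) + 2 * lam + (4/3) * lam ^ 3
        ≤ (16 * lam ^ 4 * (2 * lam * Real.sinh (2 * lam) + 2 * lam + (4/3) * lam ^ 3)) * ε ^ 2 := by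
          nlinarith
      _ ≤ _ := mul_le_mul_of_nonneg_right (le_max_right _ _) hε2.le

lemma bdd_v {lam : ℝ} (hlam : 0 < lam) :
    Bdd 1 (fun ε => vFn lam ε - 2 * lam ^ 2) := by
  refine ⟨max (2 * lam ^ 4)
      (4 * lam ^ 2 * (4 * lam ^ 2 * (Real.cosh (2 * lam) - 1) + 2 * lam ^ 2)),
    fun ε hε => ?_⟩
  obtain ⟨hε0, hε1⟩ := hε
  dsimp only
  rw [Real.rpow_one]
  have hs0 : 0 < Real.sqrt ε := Real.sqrt_pos.2 hε0
  have hs1 : Real.sqrt ε < 1 := by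
    rw [show (1:ℝ) = Real.sqrt 1 by simp]; exact Real.sqrt_lt_sqrt hε0.le hε1
  have hse : Real.sqrt ε ^ 2 = ε := Real.sq_sqrt hε0.le
  set s := Real.sqrt ε with hsdef
  have hsne : s ≠ 0 := ne_of_gt hs0
  have hv : vFn lam ε = ε⁻¹ * (Real.cosh (2 * lam * s) - 1) := by
    rw [vFn, if_neg (ne_of_gt hε0)]
  rcases le_or_gt (2 * lam * s) 1 with hx1 | hx1
  · have hx0 : (0:ℝ) ≤ 2 * lam * s := by positivity
    have ht := cosh_taylor hx0 hx1
    have heq : vFn lam ε - 2 * lam ^ 2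
        = ε⁻¹ * (Real.cosh (2 * lam * s) - (1 + (2 * lam * s) ^ 2 / 2)) := by
      rw [hv, ← hse]; field_simp; ring
    rw [heq, abs_mul, abs_inv, abs_of_pos hε0]
    have h2 : ε⁻¹ * |Real.cosh (2 * lam * s) - (1 + (2 * lam * s) ^ 2 / 2)|
        ≤ ε⁻¹ * ((2 * lam * s) ^ 4 / 10) := by
      exact mul_le_mul_of_nonneg_left ht (by positivity)
    have h3 : ε⁻¹ * ((2 * lam * s) ^ 4 / 10) = (16/10) * lam ^ 4 * ε := by
      rw [← hse]; field_simp; ring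
    rw [h3] at h2
    refine h2.trans ?_
    have : (16/10) * lam ^ 4 ≤ 2 * lam ^ 4 := by nlinarith [pow_pos hlam 4]
    calc (16/10) * lam ^ 4 * ε ≤ 2 * lam ^ 4 * ε := mul_le_mul_of_nonneg_right this hε0.le
      _ ≤ _ := mul_le_mul_of_nonneg_right (le_max_left _ _) hε0.le
  · have hεlarge : 1 < 4 * lam ^ 2 * ε := by nlinarith [hse, hs0]
    have hεinv : ε⁻¹ < 4 * lam ^ 2 := by
      rw [inv_eq_one_div, div_lt_iff₀ hε0]
      linarith
    have hxle : 2 * lam * s ≤ 2 * lam := by nlinarith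
    have hch : Real.cosh (2 * lam * s) ≤ Real.cosh (2 * lam) := by
      rw [Real.cosh_le_cosh, abs_of_pos (by positivity), abs_of_pos (by positivity)]
      exact hxle
    have hch1 : 1 ≤ Real.cosh (2 * lam * s) := Real.one_le_cosh _
    have hM : |vFn lam ε - 2 * lam ^ 2|
        ≤ 4 * lam ^ 2 * (Real.cosh (2 * lam) - 1) + 2 * lam ^ 2 := by
      rw [hv]
      have h1 : |ε⁻¹ * (Real.cosh (2 * lam * s) - 1)|
          ≤ 4 * lam ^ 2 * (Real.cosh (2 * lam) - 1) := by
        have hcc : 1 ≤ Real.cosh (2 * lam) := Real.one_le_cosh _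
        rw [abs_of_nonneg (mul_nonneg (inv_pos.2 hε0).le (by linarith))]
        nlinarith [inv_pos.2 hε0]
      have h2 : |2 * lam ^ 2| = 2 * lam ^ 2 := abs_of_pos (by positivity)
      calc |ε⁻¹ * (Real.cosh (2 * lam * s) - 1) - 2 * lam ^ 2|
          ≤ |ε⁻¹ * (Real.cosh (2 * lam * s) - 1)| + |2 * lam ^ 2| := abs_sub _ _
        _ ≤ _ := by rw [h2]; linarith
    refine hM.trans ?_
    have hM0 : (0:ℝ) ≤ 4 * lam ^ 2 * (Real.cosh (2 * lam) - 1) + 2 * lam ^ 2 := by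
      have := Real.one_le_cosh (2 * lam); nlinarith
    calc 4 * lam ^ 2 * (Real.cosh (2 * lam) - 1) + 2 * lam ^ 2
        ≤ (4 * lam ^ 2 * (4 * lam ^ 2 * (Real.cosh (2 * lam) - 1) + 2 * lam ^ 2)) * ε := by
          nlinarith [mul_nonneg hM0 (by linarith : (0:ℝ) ≤ 4 * lam ^ 2 * ε - 1)]
      _ ≤ _ := mul_le_mul_of_nonneg_right (le_max_right _ _) hε0.le

namespace Bdd

lemma affine (a b : ℝ) : Bdd 0 (fun ε => a + ε * b) := by
  refine ⟨|a| + |b|, fun ε hε => ?_⟩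
  rw [Real.rpow_zero, mul_one]
  calc |a + ε * b| ≤ |a| + |ε * b| := abs_add_le _ _
    _ ≤ |a| + |b| := by
        rw [abs_mul, abs_of_pos hε.1]
        nlinarith [abs_nonneg b, hε.1, hε.2]

lemma sq_const (b : ℝ) : Bdd 2 (fun ε => ε ^ 2 * b) := by
  refine ⟨|b|, fun ε hε => ?_⟩
  have : ε ^ (2:ℝ) = ε ^ 2 := by rw [← Real.rpow_natCast ε 2]; norm_num
  rw [this, abs_mul, abs_of_pos (pow_pos hε.1 2)]
  nlinarith [abs_nonneg b, pow_pos hε.1 2]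

lemma const_mul_eps (b : ℝ) : Bdd 1 (fun ε => ε * b) := by
  have := Bdd.eps.mul (Bdd.const b)
  exact (this.exp_eq (by norm_num))

end Bdd

lemma bdd_u0 {lam : ℝ} (hlam : 0 < lam) : Bdd 0 (fun ε => uFn lam ε) := by
  have h := ((bdd_u hlam).mono (by norm_num : (0:ℝ) ≤ 2)).add (Bdd.affine (2*lam) ((4/3)*lam^3))
  exact h.congr (fun ε _ => by ring)

lemma bdd_u1 {lam : ℝ} (hlam : 0 < lam) : Bdd 1 (fun ε => uFn lam ε - 2 * lam) := by
  have h := ((bdd_u hlam).mono (by norm_num : (1:ℝ) ≤ 2)).add (Bdd.const_mul_eps ((4/3)*lam^3))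
  exact h.congr (fun ε _ => by ring)

lemma bdd_v0 {lam : ℝ} (hlam : 0 < lam) : Bdd 0 (fun ε => vFn lam ε) := by
  have h := ((bdd_v hlam).mono (by norm_num : (0:ℝ) ≤ 1)).add (Bdd.const (2*lam^2))
  exact h.congr (fun ε _ => by ring)

set_option maxRecDepth 40000 in
theorem stmt0 (m : ℕ) (hm : 1 ≤ m) (r : Fin m → ℝ) (hr : ∀ k, 0 < r k)
    (hrsum : ∑ k, r k = 1) (lam : ℝ) (hlam : 0 < lam) :
    ∃ rstar : Fin m → ℝ,
      ∀ γ rt : ℝ → Fin m → ℝ,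
        -- γ^ε_k = λ((2/r_k) Σ_{k'>k} ((k'-k)/k) r_{k'} + 1) + O(ε)
        (∀ k : Fin m, ∃ Ck : ℝ, ∀ ε ∈ Set.Ioo (0:ℝ) 1,
          |γ ε k - lam * ((2 / r k) *
              (∑ k' ∈ Finset.Ioi k,
                ((((k' : ℕ) : ℝ) + 1) - (((k : ℕ) : ℝ) + 1)) / (((k : ℕ) : ℝ) + 1) * r k') + 1)|
            ≤ Ck * ε) →
        -- r̃^ε_k = r_k + ε r̃*_k + O(ε^{3/2})
        (∀ k : Fin m, ∃ Ck : ℝ, ∀ ε ∈ Set.Ioo (0:ℝ) 1,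
          |rt ε k - r k - ε * rstar k| ≤ Ck * ε ^ ((3:ℝ)/2)) →
        ∃ C : ℝ, ∀ ε ∈ Set.Ioo (0:ℝ) 1, ∀ j : Fin m,
          |Real.sqrt ε * (Aeps m lam ε).mulVec (rt ε) j
              - Real.sqrt ε * (1/4) *
                ∑ k ∈ Finset.Ici j, r k * (uFn lam ε - ε * γ ε k * vFn lam ε)|
            ≤ C * ε ^ 2 ∧
          |ε * (Bmat m lam).mulVec (rt ε) j
              - ε * (1/4) * (r j * (γ ε j * uFn lam ε - vFn lam ε))|
            ≤ C * ε ^ 2 := by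
  have hlamne : lam ≠ 0 := hlam.ne'
  obtain ⟨γ0, hγ0⟩ : ∃ f : Fin m → ℝ, f = (fun k => lam * ((2 / r k) *
      (∑ k' ∈ Finset.Ioi k,
        ((((k' : ℕ) : ℝ) + 1) - (((k : ℕ) : ℝ) + 1)) / (((k : ℕ) : ℝ) + 1) * r k') + 1)) :=
    ⟨_, rfl⟩
  obtain ⟨cc, hcc⟩ : ∃ f : Fin m → ℝ, f = (fun k : Fin m => (3 * (((k : ℕ) : ℝ) + 1) - 2) / 12) :=
    ⟨_, rfl⟩
  obtain ⟨w, hwdef⟩ : ∃ w : ℕ → ℝ, w = (fun n =>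
      ∑ k ∈ Finset.univ.filter (fun k : Fin m => n ≤ (k : ℕ)),
        ((2/lam) * (r k * (lam^3/3 - lam^2/2 * γ0 k) - lam^3 * cc k * r k)
          + lam^2 * (n : ℝ) * r k)) := ⟨_, rfl⟩
  refine ⟨fun j => w (j : ℕ) - w ((j : ℕ) + 1), ?_⟩
  intro γ rt hγ hrt
  -- the filter sets
  have hfilter_empty : ∀ n : ℕ, m ≤ n →
      Finset.univ.filter (fun k : Fin m => n ≤ (k : ℕ)) = ∅ := by
    intro n hn
    ext k
    simp only [Finset.mem_filter, Finset.mem_univ, true_and, Finset.notMem_empty, iff_false]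
    have := k.2; omega
  have hfilter_step : ∀ n : ℕ, (hn : n < m) →
      Finset.univ.filter (fun k : Fin m => n ≤ (k : ℕ))
        = insert (⟨n, hn⟩ : Fin m) (Finset.univ.filter (fun k : Fin m => n + 1 ≤ (k : ℕ))) := by
    intro n hn
    ext k
    simp only [Finset.mem_filter, Finset.mem_univ, true_and, Finset.mem_insert, Fin.ext_iff]
    omega
  -- telescoping sum
  have hsumw : ∀ d n, m - n ≤ d →
      ∑ k ∈ Finset.univ.filter (fun k : Fin m => n ≤ (k : ℕ)),
        (w (k : ℕ) - w ((k : ℕ) + 1)) = w n := by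
    intro d
    induction d with
    | zero =>
        intro n hn
        have hmn : m ≤ n := by omega
        rw [hfilter_empty n hmn, Finset.sum_empty, hwdef]
        dsimp only
        rw [hfilter_empty n hmn, Finset.sum_empty]
    | succ d ih =>
        intro n hn
        by_cases hnm : m ≤ n
        · rw [hfilter_empty n hnm, Finset.sum_empty, hwdef]
          dsimp only
          rw [hfilter_empty n hnm, Finset.sum_empty]
        · push_neg at hnm
          rw [hfilter_step n hnm, Finset.sum_insert (by simp)]
          rw [ih (n + 1) (by omega)]
          ring
  have hIci : ∀ j : Fin m, Finset.Ici j
      = Finset.univ.filter (fun k : Fin m => (j : ℕ) ≤ (k : ℕ)) := by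
    intro j; ext k
    simp only [Finset.mem_Ici, Finset.mem_filter, Finset.mem_univ, true_and, Fin.le_def]
  have hS : ∀ j : Fin m,
      ∑ k ∈ Finset.Ici j, (w (k : ℕ) - w ((k : ℕ) + 1)) = w (j : ℕ) := by
    intro j
    rw [hIci j]
    exact hsumw m (j : ℕ) (by omega)
  -- key identity for rstar
  have key : ∀ j : Fin m,
      ∑ k ∈ Finset.Ici j,
        ((lam/2) * (w (k : ℕ) - w ((k : ℕ) + 1))
          + (lam^3 * (cc k - ((j : ℕ) : ℝ)/2) * r k
            - r k * (lam^3/3 - lam^2/2 * γ0 k))) = 0 := by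
    intro j
    rw [Finset.sum_add_distrib, ← Finset.mul_sum, hS j]
    have hwj : w (j : ℕ) = ∑ k ∈ Finset.Ici j,
        ((2/lam) * (r k * (lam^3/3 - lam^2/2 * γ0 k) - lam^3 * cc k * r k)
          + lam^2 * ((j : ℕ) : ℝ) * r k) := by
      rw [hwdef, hIci j]
    rw [hwj, Finset.mul_sum, ← Finset.sum_add_distrib]
    apply Finset.sum_eq_zero
    intro k _
    field_simp
    ring
  have I2 : ∀ j : Fin m, ∑ k, Bmat m lam j k * r k
      = (1/4) * (r j * (γ0 j * (2 * lam) - 2 * lam ^ 2)) := by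
    intro j
    have hrj : r j ≠ 0 := (hr j).ne'
    have hjpos : (0:ℝ) < ((j : ℕ) : ℝ) + 1 := by positivity
    have hL : ∑ k, Bmat m lam j k * r k
        = lam ^ 2 * ∑ k ∈ Finset.Ioi j,
            (((((k : ℕ) : ℝ) + 1) - (((j : ℕ) : ℝ) + 1)) / (((j : ℕ) : ℝ) + 1)) * r k := by
      have h1 : ∀ k : Fin m, k ∉ Finset.Ioi j → Bmat m lam j k * r k = 0 := by
        intro k hk
        rw [Finset.mem_Ioi, not_lt] at hk
        have hkj : ((k : ℕ) : ℝ) + 1 - (((j : ℕ) : ℝ) + 1) ≤ 0 := by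
          have h2 : (k : ℕ) ≤ (j : ℕ) := hk
          have h3 : ((k : ℕ) : ℝ) ≤ ((j : ℕ) : ℝ) := Nat.cast_le.2 h2
          linarith
        simp only [Bmat, max_eq_right hkj]
        ring
      rw [← Finset.sum_subset (Finset.subset_univ (Finset.Ioi j)) (fun k _ hk => h1 k hk)]
      rw [Finset.mul_sum]
      apply Finset.sum_congr rfl
      intro k hk
      rw [Finset.mem_Ioi] at hk
      have h2 : (j : ℕ) < (k : ℕ) := hk
      have h3 : ((j : ℕ) : ℝ) ≤ ((k : ℕ) : ℝ) := Nat.cast_le.2 h2.le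
      have h4 : (0:ℝ) ≤ ((k : ℕ) : ℝ) + 1 - (((j : ℕ) : ℝ) + 1) := by linarith
      simp only [Bmat, max_eq_left h4]
      ring
    rw [hL, hγ0]
    dsimp only
    field_simp
    ring
  -- Bdd facts for the data
  have Bγ : ∀ k : Fin m, Bdd 1 (fun ε => γ ε k - γ0 k) := by
    intro k
    obtain ⟨Ck, hCk⟩ := hγ k
    refine ⟨Ck, fun ε hε => ?_⟩
    rw [Real.rpow_one, hγ0]
    simpa using hCk ε hε
  have Brt : ∀ k : Fin m, Bdd (3/2)
      (fun ε => rt ε k - r k - ε * (w (k : ℕ) - w ((k : ℕ) + 1))) := by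
    intro k
    obtain ⟨Ck, hCk⟩ := hrt k
    refine ⟨Ck, fun ε hε => ?_⟩
    simpa using hCk ε hε
  have Bu2 := bdd_u hlam
  have Bv1 := bdd_v hlam
  have Bu0' := bdd_u0 hlam
  have Bu1' := bdd_u1 hlam
  have Bv0' := bdd_v0 hlam
  -- first bound
  have hB1 : ∀ j : Fin m, Bdd 2 (fun ε =>
      Real.sqrt ε * (Aeps m lam ε).mulVec (rt ε) j
        - Real.sqrt ε * (1/4) *
          ∑ k ∈ Finset.Ici j, r k * (uFn lam ε - ε * γ ε k * vFn lam ε)) := by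
    intro j
    have hΦ : ∀ k ∈ Finset.Ici j, Bdd (3/2) (fun ε =>
        ((lam/2 + ε * (lam^3 * (cc k - ((j : ℕ) : ℝ)/2)))
            * (rt ε k - r k - ε * (w (k : ℕ) - w ((k : ℕ) + 1)))
          + ε^2 * (lam^3 * (cc k - ((j : ℕ) : ℝ)/2) * (w (k : ℕ) - w ((k : ℕ) + 1))))
        + ((1/4) * r k) * ((2*lam + (4/3)*lam^3*ε - uFn lam ε)
          + ε * ((γ ε k - γ0 k) * vFn lam ε + γ0 k * (vFn lam ε - 2*lam^2)))) := by
      intro k _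
      have p1 : Bdd (3/2) (fun ε => (lam/2 + ε * (lam^3 * (cc k - ((j : ℕ) : ℝ)/2)))
          * (rt ε k - r k - ε * (w (k : ℕ) - w ((k : ℕ) + 1)))) :=
        ((Bdd.affine _ _).mul (Brt k)).exp_eq (by norm_num)
      have p2 : Bdd (3/2) (fun ε => ε^2 * (lam^3 * (cc k - ((j : ℕ) : ℝ)/2)
          * (w (k : ℕ) - w ((k : ℕ) + 1)))) :=
        (Bdd.sq_const _).mono (by norm_num)
      have p3 : Bdd (3/2) (fun ε => 2*lam + (4/3)*lam^3*ε - uFn lam ε) :=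
        (Bu2.neg.congr (fun ε _ => by ring)).mono (by norm_num)
      have p4 : Bdd 1 (fun ε => (γ ε k - γ0 k) * vFn lam ε) :=
        ((Bγ k).mul Bv0').exp_eq (by norm_num)
      have p5 : Bdd 1 (fun ε => γ0 k * (vFn lam ε - 2*lam^2)) :=
        ((Bdd.const _).mul Bv1).exp_eq (by norm_num)
      have p6 : Bdd (3/2) (fun ε => ε * ((γ ε k - γ0 k) * vFn lam ε
          + γ0 k * (vFn lam ε - 2*lam^2))) :=
        ((Bdd.eps.mul (p4.add p5)).exp_eq (by norm_num : (1+1:ℝ) = 2)).mono (by norm_num)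
      exact (p1.add p2).add
        (((Bdd.const ((1/4) * r k)).mul (p3.add p6)).exp_eq (by norm_num))
    have hmain := (Bdd.sqrt.mul (Bdd.sum hΦ)).exp_eq (by norm_num : (1/2 + 3/2 : ℝ) = 2)
    refine hmain.congr ?_
    intro ε hε
    have hA : (Aeps m lam ε).mulVec (rt ε) j
        = ∑ k ∈ Finset.Ici j,
            (lam/2 + ε * (lam^3 * (cc k - ((j : ℕ) : ℝ)/2))) * rt ε k := by
      have hent : ∀ k : Fin m, Aeps m lam ε j k * rt ε k
          = if (j : ℕ) ≤ (k : ℕ)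
            then (lam/2 + ε * (lam^3 * (cc k - ((j : ℕ) : ℝ)/2))) * rt ε k else 0 := by
        intro k
        simp only [Aeps, hcc]
        split_ifs with h
        · ring
        · ring
      simp only [Matrix.mulVec, dotProduct]
      rw [Finset.sum_congr rfl (fun k _ => hent k), ← Finset.sum_filter, ← hIci j]
    rw [hA]
    have h1 : ∀ k ∈ Finset.Ici j,
        (lam/2 + ε * (lam^3 * (cc k - ((j : ℕ) : ℝ)/2))) * rt ε k
        = (((lam/2 + ε * (lam^3 * (cc k - ((j : ℕ) : ℝ)/2)))
              * (rt ε k - r k - ε * (w (k : ℕ) - w ((k : ℕ) + 1)))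
            + ε^2 * (lam^3 * (cc k - ((j : ℕ) : ℝ)/2) * (w (k : ℕ) - w ((k : ℕ) + 1))))
          + ((1/4) * r k) * ((2*lam + (4/3)*lam^3*ε - uFn lam ε)
            + ε * ((γ ε k - γ0 k) * vFn lam ε + γ0 k * (vFn lam ε - 2*lam^2))))
          + (ε * ((lam/2) * (w (k : ℕ) - w ((k : ℕ) + 1))
              + (lam^3 * (cc k - ((j : ℕ) : ℝ)/2) * r k
                - r k * (lam^3/3 - lam^2/2 * γ0 k)))
            + (1/4) * (r k * (uFn lam ε - ε * γ ε k * vFn lam ε))) := by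
      intro k _
      ring
    have e1 : ∑ k ∈ Finset.Ici j, (ε * ((lam/2) * (w (k : ℕ) - w ((k : ℕ) + 1))
        + (lam^3 * (cc k - ((j : ℕ) : ℝ)/2) * r k
          - r k * (lam^3/3 - lam^2/2 * γ0 k)))) = 0 := by
      rw [← Finset.mul_sum, key j, mul_zero]
    have e2 : (∑ k ∈ Finset.Ici j,
          (lam/2 + ε * (lam^3 * (cc k - ((j : ℕ) : ℝ)/2))) * rt ε k)
        = (∑ k ∈ Finset.Ici j,
            (((lam/2 + ε * (lam^3 * (cc k - ((j : ℕ) : ℝ)/2)))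
                * (rt ε k - r k - ε * (w (k : ℕ) - w ((k : ℕ) + 1)))
              + ε^2 * (lam^3 * (cc k - ((j : ℕ) : ℝ)/2) * (w (k : ℕ) - w ((k : ℕ) + 1))))
            + ((1/4) * r k) * ((2*lam + (4/3)*lam^3*ε - uFn lam ε)
              + ε * ((γ ε k - γ0 k) * vFn lam ε + γ0 k * (vFn lam ε - 2*lam^2)))))
          + ((∑ k ∈ Finset.Ici j, (ε * ((lam/2) * (w (k : ℕ) - w ((k : ℕ) + 1))
              + (lam^3 * (cc k - ((j : ℕ) : ℝ)/2) * r k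
                - r k * (lam^3/3 - lam^2/2 * γ0 k)))))
            + ∑ k ∈ Finset.Ici j,
              (1/4) * (r k * (uFn lam ε - ε * γ ε k * vFn lam ε))) := by
      rw [← Finset.sum_add_distrib, ← Finset.sum_add_distrib]
      exact Finset.sum_congr rfl h1
    rw [e2, e1, ← Finset.mul_sum]
    ring
  -- second bound
  have hB2 : ∀ j : Fin m, Bdd 2 (fun ε =>
      ε * (Bmat m lam).mulVec (rt ε) j
        - ε * (1/4) * (r j * (γ ε j * uFn lam ε - vFn lam ε))) := by
    intro j
    have hδ : ∀ k : Fin m, Bdd 1 (fun ε => rt ε k - r k) := by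
      intro k
      have h := ((Brt k).mono (by norm_num : (1:ℝ) ≤ 3/2)).add
        (Bdd.const_mul_eps (w (k : ℕ) - w ((k : ℕ) + 1)))
      exact h.congr (fun ε _ => by ring)
    have pS : Bdd 1 (fun ε => ∑ k, Bmat m lam j k * (rt ε k - r k)) :=
      Bdd.sum (fun k _ => ((Bdd.const (Bmat m lam j k)).mul (hδ k)).exp_eq (by norm_num))
    have q1 : Bdd 1 (fun ε => (γ0 j - γ ε j) * uFn lam ε) :=
      (((Bγ j).neg.congr (fun ε _ => by ring)).mul Bu0').exp_eq (by norm_num)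
    have q2 : Bdd 1 (fun ε => γ0 j * (2*lam - uFn lam ε)) :=
      ((Bdd.const _).mul ((Bu1').neg.congr (fun ε _ => by ring))).exp_eq (by norm_num)
    have pR : Bdd 1 (fun ε => ((1/4) * r j) * ((γ0 j - γ ε j) * uFn lam ε
        + γ0 j * (2*lam - uFn lam ε) + (vFn lam ε - 2*lam^2))) :=
      ((Bdd.const ((1/4) * r j)).mul ((q1.add q2).add Bv1)).exp_eq (by norm_num)
    have hmain := (Bdd.eps.mul (pS.add pR)).exp_eq (by norm_num : (1+1:ℝ) = 2)
    refine hmain.congr ?_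
    intro ε hε
    have hBv : (Bmat m lam).mulVec (rt ε) j = ∑ k, Bmat m lam j k * rt ε k := by
      simp [Matrix.mulVec, dotProduct]
    rw [hBv]
    have h1 : ∀ k ∈ (Finset.univ : Finset (Fin m)), Bmat m lam j k * rt ε k
        = Bmat m lam j k * (rt ε k - r k) + Bmat m lam j k * r k := fun k _ => by ring
    rw [Finset.sum_congr rfl h1, Finset.sum_add_distrib, I2 j]
    ring
  -- assemble
  choose C1 hC1 using hB1
  choose C2 hC2 using hB2
  refine ⟨∑ i : Fin m, (max (C1 i) 0 + max (C2 i) 0), fun ε hε j => ?_⟩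
  have hrp : ε ^ (2:ℝ) = ε ^ 2 := by rw [← Real.rpow_natCast ε 2]; norm_num
  have hε2 : (0:ℝ) ≤ ε ^ 2 := by positivity
  have hCle1 : C1 j ≤ ∑ i : Fin m, (max (C1 i) 0 + max (C2 i) 0) := by
    calc C1 j ≤ max (C1 j) 0 + max (C2 j) 0 := by
          have := le_max_right (C2 j) 0; have := le_max_left (C1 j) 0; linarith
      _ ≤ _ := Finset.single_le_sum (f := fun i => max (C1 i) 0 + max (C2 i) 0)
          (fun i _ => add_nonneg (le_max_right _ _) (le_max_right _ _)) (Finset.mem_univ j)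
  have hCle2 : C2 j ≤ ∑ i : Fin m, (max (C1 i) 0 + max (C2 i) 0) := by
    calc C2 j ≤ max (C1 j) 0 + max (C2 j) 0 := by
          have := le_max_right (C1 j) 0; have := le_max_left (C2 j) 0; linarith
      _ ≤ _ := Finset.single_le_sum (f := fun i => max (C1 i) 0 + max (C2 i) 0)
          (fun i _ => add_nonneg (le_max_right _ _) (le_max_right _ _)) (Finset.mem_univ j)
  constructor
  · have h := hC1 j ε hε
    rw [hrp] at h
    exact h.trans (mul_le_mul_of_nonneg_right hCle1 hε2)
  · have h := hC2 j ε hε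
    rw [hrp] at h
    exact h.trans (mul_le_mul_of_nonneg_right hCle2 hε2)
  -- identity for B
end

section
/- There exists ε₀ > 0 such that for every ε ∈ [0, ε₀) there is a unique pair of vectors (γ, r̃) ∈ ℝ^m × ℝ^m satisfying the exact matching system: A^ε r̃ = (1/4)( u(ε) A r − ε v(ε) A R γ ) and B r̃ = (1/4)( u(ε) R γ − v(ε) r ), where A is the m×m matrix with A_{jk} := 1_{{j≤k}}, R is the diagonal matrix with entries R_{kk} := r_k, and r := (r_1,…,r_m). Moreover, for such ε the matrix A^ε is invertible and the matrix R + ε (v(ε)/u(ε)) B (A^ε)^{-1} A R is invertible. -/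
open Finset

/-- The matrix `A`, `A_{jk} = 1_{j≤k}`. -/
def Amat (m : ℕ) : Matrix (Fin m) (Fin m) ℝ :=
  fun j k => if (j : ℕ) ≤ (k : ℕ) then 1 else 0

private lemma mulVec_eq_iff {n : ℕ} {N : Matrix (Fin n) (Fin n) ℝ} (hN : IsUnit N.det)
    (x y : Fin n → ℝ) : N.mulVec x = y ↔ x = N⁻¹.mulVec y := by
  constructor
  · rintro rfl
    rw [Matrix.mulVec_mulVec, Matrix.nonsing_inv_mul _ hN, Matrix.one_mulVec]
  · rintro rfl
    rw [Matrix.mulVec_mulVec, Matrix.mul_nonsing_inv _ hN, Matrix.one_mulVec]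

private lemma cFn_eq (lam : ℝ) (hlam : 0 < lam) :
    (fun ε : ℝ => ε * (vFn lam ε / uFn lam ε)) =
      fun ε : ℝ => Real.sqrt ε * Real.tanh (lam * Real.sqrt ε) := by
  funext ε
  rcases lt_trichotomy ε 0 with h | h | h
  · have hs : Real.sqrt ε = 0 := Real.sqrt_eq_zero'.mpr h.le
    simp [uFn, vFn, h.ne, hs]
  · simp [h, uFn, vFn]
  · have hs : 0 < Real.sqrt ε := Real.sqrt_pos.mpr h
    have hε2 : Real.sqrt ε ^ 2 = ε := Real.sq_sqrt h.le
    have ht : 0 < lam * Real.sqrt ε := mul_pos hlam hs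
    have hsinh : Real.sinh (lam * Real.sqrt ε) ≠ 0 := (Real.sinh_pos_iff.mpr ht).ne'
    have hcosh : Real.cosh (lam * Real.sqrt ε) ≠ 0 := (Real.cosh_pos _).ne'
    have h2 : 2 * lam * Real.sqrt ε = 2 * (lam * Real.sqrt ε) := by ring
    rw [uFn, vFn, if_neg h.ne', if_neg h.ne', h2, Real.cosh_two_mul, Real.sinh_two_mul,
      Real.cosh_sq, Real.tanh_eq_sinh_div_cosh, ← hε2]
    field_simp
    ring

theorem stmt1 (m : ℕ) (hm : 1 ≤ m) (r : Fin m → ℝ) (hr : ∀ k, 0 < r k)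
    (hrsum : ∑ k, r k = 1) (lam : ℝ) (hlam : 0 < lam) :
    ∃ ε₀ : ℝ, 0 < ε₀ ∧ ∀ ε : ℝ, 0 ≤ ε → ε < ε₀ →
      (∃! p : (Fin m → ℝ) × (Fin m → ℝ),
        -- A^ε r̃ = (1/4)(u(ε) A r − ε v(ε) A R γ)
        (Aeps m lam ε).mulVec p.2 =
          (1/4 : ℝ) • (uFn lam ε • (Amat m).mulVec r
            - (ε * vFn lam ε) • (Amat m).mulVec (fun k => r k * p.1 k)) ∧
        -- B r̃ = (1/4)(u(ε) R γ − v(ε) r)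
        (Bmat m lam).mulVec p.2 =
          (1/4 : ℝ) • (uFn lam ε • (fun j => r j * p.1 j) - vFn lam ε • r)) ∧
      IsUnit (Aeps m lam ε) ∧
      IsUnit (Matrix.diagonal r +
        (ε * (vFn lam ε / uFn lam ε)) •
          (Bmat m lam * (Aeps m lam ε)⁻¹ * Amat m * Matrix.diagonal r)) := by
  classical
  -- the coefficient function
  set c : ℝ → ℝ := fun ε => ε * (vFn lam ε / uFn lam ε) with hcdef
  have hccont : Continuous c := by
    rw [hcdef, cFn_eq lam hlam]
    have htanh : Continuous Real.tanh := by
      simp only [funext Real.tanh_eq_sinh_div_cosh]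
      exact Real.continuous_sinh.div Real.continuous_cosh fun x => (Real.cosh_pos x).ne'
    exact Real.continuous_sqrt.mul (htanh.comp (continuous_const.mul Real.continuous_sqrt))
  have hc0 : c 0 = 0 := by simp [hcdef]
  -- continuity of Aeps in ε
  have hAcont : Continuous fun ε : ℝ => Aeps m lam ε := by
    apply continuous_matrix
    intro j k
    unfold Aeps
    by_cases h : (j : ℕ) ≤ (k : ℕ) <;> simp only [h, if_true, if_false] <;> fun_prop
  have hdetAcont : Continuous fun ε : ℝ => (Aeps m lam ε).det := hAcont.matrix_det
  -- A^0 triangular, det = (lam/2)^m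
  have hdetA0 : (Aeps m lam 0).det = (lam / 2) ^ m := by
    rw [Matrix.det_of_upperTriangular (M := Aeps m lam 0)]
    · have : ∀ i : Fin m, Aeps m lam 0 i i = lam / 2 := by
        intro i; simp [Aeps]
      simp [this]
      rw [div_pow]
    · intro i j hij
      have : ¬ (i : ℕ) ≤ (j : ℕ) := by
        simpa using (Fin.lt_iff_val_lt_val.mp hij)
      simp [Aeps, this]
  have hdetA0ne : (Aeps m lam 0).det ≠ 0 := by
    rw [hdetA0]; positivity
  -- continuity of the inverse at 0
  have hinvcont : ContinuousAt (fun ε : ℝ => (Aeps m lam ε)⁻¹) 0 := by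
    have heq : (fun ε : ℝ => (Aeps m lam ε)⁻¹) =
        fun ε : ℝ => ((Aeps m lam ε).det)⁻¹ • (Aeps m lam ε).adjugate := by
      funext ε
      rw [Matrix.inv_def, Ring.inverse_eq_inv']
    rw [heq]
    exact (hdetAcont.continuousAt.inv₀ hdetA0ne).smul hAcont.matrix_adjugate.continuousAt
  -- the matrix N
  set N : ℝ → Matrix (Fin m) (Fin m) ℝ := fun ε =>
    Matrix.diagonal r +
      c ε • (Bmat m lam * (Aeps m lam ε)⁻¹ * Amat m * Matrix.diagonal r) with hNdef
  have hNcont : ContinuousAt N 0 := by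
    apply ContinuousAt.add continuousAt_const
    exact hccont.continuousAt.smul
      (((continuousAt_const.mul hinvcont).mul continuousAt_const).mul continuousAt_const)
  have hdetNcont : ContinuousAt (fun ε => (N ε).det) 0 :=
    (continuous_id.matrix_det.continuousAt).comp hNcont
  have hdetN0ne : (N 0).det ≠ 0 := by
    have : N 0 = Matrix.diagonal r := by
      rw [hNdef]; simp [hc0]
    rw [this, Matrix.det_diagonal]
    exact (Finset.prod_pos fun k _ => hr k).ne'
  -- eventually both determinants are nonzero
  have hev : ∀ᶠ ε in nhds (0:ℝ), (Aeps m lam ε).det ≠ 0 ∧ (N ε).det ≠ 0 :=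
    (hdetAcont.continuousAt.eventually_ne hdetA0ne).and (hdetNcont.eventually_ne hdetN0ne)
  obtain ⟨ε₀, hε₀pos, hball⟩ := Metric.eventually_nhds_iff.mp hev
  refine ⟨ε₀, hε₀pos, fun ε hε0 hεlt => ?_⟩
  have hdist : dist ε (0:ℝ) < ε₀ := by
    rw [Real.dist_eq, sub_zero, abs_of_nonneg hε0]; exact hεlt
  obtain ⟨hdA, hdN⟩ := hball hdist
  have hdA' : IsUnit (Aeps m lam ε).det := isUnit_iff_ne_zero.mpr hdA
  have hdN' : IsUnit (N ε).det := isUnit_iff_ne_zero.mpr hdN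
  -- u positive
  have hu : uFn lam ε ≠ 0 := by
    rcases eq_or_lt_of_le hε0 with h | h
    · rw [uFn, if_pos h.symm]; positivity
    · rw [uFn, if_neg h.ne']
      have hs : 0 < Real.sqrt ε := Real.sqrt_pos.mpr h
      have : 0 < Real.sinh (2 * lam * Real.sqrt ε) :=
        Real.sinh_pos_iff.mpr (by positivity)
      positivity
  set u := uFn lam ε
  set v := vFn lam ε
  set Aε := Aeps m lam ε
  set B := Bmat m lam
  set A := Amat m
  set R := Matrix.diagonal r
  -- abbreviations
  set s : (Fin m → ℝ) → (Fin m → ℝ) := fun γ =>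
    (1/4 : ℝ) • (u • A.mulVec r - (ε * v) • A.mulVec (fun k => r k * γ k)) with hsdef
  set f : (Fin m → ℝ) → (Fin m → ℝ) := fun γ => Aε⁻¹.mulVec (s γ) with hfdef
  set w : Fin m → ℝ := (B * Aε⁻¹ * A).mulVec r + (v / u) • r with hwdef
  set γ₀ : Fin m → ℝ := (N ε)⁻¹.mulVec w with hγ₀def
  -- key equivalence for the second equation
  have hRmul : ∀ γ : Fin m → ℝ, (fun k => r k * γ k) = R.mulVec γ := by
    intro γ; funext k; rw [Matrix.mulVec_diagonal]
  have hcu : u * c ε = ε * v := by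
    show u * (ε * (v / u)) = ε * v
    rw [mul_comm u, mul_assoc, div_mul_cancel₀ v hu]
  have hvu : u * (v / u) = v := by
    rw [mul_comm, div_mul_cancel₀ v hu]
  have key : ∀ γ : Fin m → ℝ,
      (B.mulVec (f γ) = (1/4 : ℝ) • (u • (fun j => r j * γ j) - v • r)) ↔
        (N ε).mulVec γ = w := by
    intro γ
    set P := (B * Aε⁻¹ * A).mulVec r with hP
    set Q := (B * Aε⁻¹ * A * R).mulVec γ with hQ
    set S := R.mulVec γ with hS
    have hLHS : B.mulVec (f γ) = (1/4 : ℝ) • (u • P - (ε * v) • Q) := by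
      rw [hfdef]
      simp only []
      rw [Matrix.mulVec_mulVec, hsdef]
      simp only []
      rw [Matrix.mulVec_smul, Matrix.mulVec_sub, Matrix.mulVec_smul, Matrix.mulVec_smul,
        hRmul γ, Matrix.mulVec_mulVec, Matrix.mulVec_mulVec, Matrix.mulVec_mulVec]
    have hNmul : (N ε).mulVec γ = S + c ε • Q := by
      rw [hNdef]
      simp only []
      rw [Matrix.add_mulVec, Matrix.smul_mulVec]
    have hquarter : Function.Injective fun x : Fin m → ℝ => (1/4 : ℝ) • x :=
      smul_right_injective _ (by norm_num)
    have husmul : Function.Injective fun x : Fin m → ℝ => u • x :=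
      smul_right_injective _ hu
    rw [hLHS, hNmul, hwdef, hRmul γ, ← hS]
    constructor
    · intro h
      have h4 : u • P - (ε * v) • Q = u • S - v • r := hquarter h
      apply husmul
      show u • (S + c ε • Q) = u • (P + (v / u) • r)
      simp only [smul_add, smul_smul, hcu, hvu]
      exact (sub_eq_sub_iff_add_eq_add.mp h4).symm
    · intro h
      have h' := congrArg (fun x : Fin m → ℝ => u • x) h
      simp only [smul_add, smul_smul, hcu, hvu] at h'
      exact congrArg (fun x : Fin m → ℝ => (1/4 : ℝ) • x)
        (sub_eq_sub_iff_add_eq_add.mpr h'.symm)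
  refine ⟨⟨⟨γ₀, f γ₀⟩, ⟨?_, ?_⟩, ?_⟩, ?_, ?_⟩
  · exact (mulVec_eq_iff hdA' _ _).mpr rfl
  · exact (key γ₀).mpr ((mulVec_eq_iff hdN' _ _).mpr rfl)
  · rintro ⟨γ, rt⟩ ⟨h1, h2⟩
    have hrt : rt = f γ := (mulVec_eq_iff hdA' _ _).mp h1
    subst hrt
    have hγ : γ = γ₀ := (mulVec_eq_iff hdN' _ _).mp ((key γ).mp h2)
    subst hγ
    rfl
  · exact (Matrix.isUnit_iff_isUnit_det _).mpr hdA'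
  · exact (Matrix.isUnit_iff_isUnit_det _).mpr hdN'
end
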